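/- The category of complete, bornologically torsionfree modules over a complete discrete valuation ring V is closed under kernels and arbitrary products; in particular it is a complete category. -/

import Mathlib

/-- A bornology on a `V`-module `M`, specified by its bounded subsets:
finite sets are bounded, bounded sets are closed under subsets and finite
unions, and every bounded subset is contained in a bounded `V`-submodule. -/
structure ModuleBornology (V M : Type) [CommRing V] [AddCommGroup M] [Module V M] :
    Type where
  IsBounded : Set M → Prop
  isBounded_subset : ∀ {S T : Set M}, S ⊆ T → IsBounded T → IsBounded S
  isBounded_union : ∀ {S T : Set M}, IsBounded S → IsBounded T → IsBounded (S ∪ T)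
  isBounded_of_finite : ∀ {S : Set M}, S.Finite → IsBounded S
  exists_bounded_submodule : ∀ {S : Set M}, IsBounded S →
    ∃ N : Submodule V M, IsBounded (N : Set M) ∧ S ⊆ (N : Set M)

/-- A bornological `V`-module is *complete* (w.r.t. the uniformiser `π`) if every
bounded subset is contained in a bounded, `π`-adically complete `V`-submodule. -/
def ModuleBornology.IsCompleteWrt {V M : Type} [CommRing V] [AddCommGroup M] [Module V M]
    (π : V) (B : ModuleBornology V M) : Prop :=
  ∀ {S : Set M}, B.IsBounded S → ∃ N : Submodule V M,
    B.IsBounded (N : Set M) ∧ S ⊆ (N : Set M) ∧ IsAdicComplete (Ideal.span {π}) N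

/-- A bornological `V`-module is *bornologically torsionfree* if multiplication by `π`
is injective and `π⁻¹ · S = {x | π • x ∈ S}` is bounded for every bounded `S`. -/
def ModuleBornology.IsTorsionfreeWrt {V M : Type} [CommRing V] [AddCommGroup M] [Module V M]
    (π : V) (B : ModuleBornology V M) : Prop :=
  Function.Injective (fun x : M => π • x) ∧
    ∀ {S : Set M}, B.IsBounded S → B.IsBounded {x : M | π • x ∈ S}

/-- A `V`-linear map is *bounded* if it maps bounded subsets to bounded subsets. -/
def IsBoundedLinMap {V M N : Type} [CommRing V] [AddCommGroup M] [Module V M]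
    [AddCommGroup N] [Module V N] (BM : ModuleBornology V M) (BN : ModuleBornology V N)
    (f : M →ₗ[V] N) : Prop :=
  ∀ {S : Set M}, BM.IsBounded S → BN.IsBounded (f '' S)

/-- A *bornological embedding*: an injective map which is a bornological isomorphism
onto its image (with the subspace bornology); equivalently, `S` is bounded iff its
image is bounded. -/
def IsBornologicalEmbedding {V M N : Type} [CommRing V] [AddCommGroup M] [Module V M]
    [AddCommGroup N] [Module V N] (BM : ModuleBornology V M) (BN : ModuleBornology V N)
    (f : M →ₗ[V] N) : Prop :=
  Function.Injective f ∧ ∀ S : Set M, BM.IsBounded S ↔ BN.IsBounded (f '' S)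

section Helpers
variable {V P : Type} [CommRing V] [AddCommGroup P] [Module V P]

lemma smodeq_iff (π : V) (Q : Submodule V P) (n : ℕ) (x y : Q) :
    x ≡ y [SMOD ((Ideal.span {π})^n • ⊤ : Submodule V Q)] ↔
      ∃ w : Q, π^n • (w : P) = (x : P) - y := by
  rw [SModEq.sub_mem, Ideal.span_singleton_pow, Submodule.ideal_span_singleton_smul,
    ← SetLike.mem_coe, Submodule.coe_pointwise_smul, Set.mem_smul_set]
  constructor
  · rintro ⟨w, -, hw⟩
    exact ⟨w, by exact_mod_cast congrArg Subtype.val hw⟩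
  · rintro ⟨w, hw⟩
    exact ⟨w, trivial, Subtype.ext (by push_cast; exact hw)⟩

lemma adicComplete_iff (π : V) (Q : Submodule V P) :
    IsAdicComplete (Ideal.span {π}) Q ↔
      ((∀ z : Q, (∀ n : ℕ, ∃ w : Q, π^n • (w : P) = (z : P)) → z = 0) ∧
       (∀ g : ℕ → Q, (∀ m n : ℕ, m ≤ n → ∃ w : Q, π^m • (w : P) = (g m : P) - g n) →
         ∃ L : Q, ∀ n : ℕ, ∃ w : Q, π^n • (w : P) = (g n : P) - L)) := by
  constructor
  · intro h
    constructor
    · intro z hz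
      refine h.toIsHausdorff.haus' z fun n => (smodeq_iff π Q n z 0).mpr ?_
      simpa using hz n
    · intro g hg
      obtain ⟨L, hL⟩ := h.toIsPrecomplete.prec' g
        (fun {m n} hmn => (smodeq_iff π Q m _ _).mpr (hg m n hmn))
      exact ⟨L, fun n => (smodeq_iff π Q n _ _).mp (hL n)⟩
  · intro ⟨h1, h2⟩
    refine { toIsHausdorff := ⟨?_⟩, toIsPrecomplete := ⟨?_⟩ }
    · intro z hz
      refine h1 z fun n => ?_
      simpa using (smodeq_iff π Q n z 0).mp (hz n)
    · intro g hg
      obtain ⟨L, hL⟩ := h2 g (fun m n hmn => (smodeq_iff π Q m _ _).mp (hg hmn))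
      exact ⟨L, fun n => (smodeq_iff π Q n _ _).mpr (hL n)⟩

lemma pow_smul_eq_zero {π : V} (h : Function.Injective (fun x : P => π • x)) (n : ℕ)
    {x : P} (hx : π^n • x = 0) : x = 0 := by
  induction n generalizing x with
  | zero => simpa using hx
  | succ k ih =>
    have hx' : π ^ k • (π • x) = 0 := by rw [← mul_smul, ← pow_succ]; exact hx
    have h2 : π • x = π • 0 := by simpa using ih hx'
    exact h h2

end Helpers

/-- Over a complete discrete valuation ring `V` (with uniformiser `π`),
the category of complete, bornologically torsionfree bornological `V`-modules is closed
under kernels (with the subspace bornology) and arbitrary products (with the product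
bornology); in particular it is a complete category. -/
theorem stmt0 {V : Type} [CommRing V] [IsDomain V] [IsDiscreteValuationRing V]
    (π : V) (hπ : Irreducible π) (hV : IsAdicComplete (Ideal.span {π}) V) :
    -- closure under kernels
    (∀ (M N : Type) [AddCommGroup M] [Module V M] [AddCommGroup N] [Module V N]
      (BM : ModuleBornology V M) (BN : ModuleBornology V N),
      BM.IsCompleteWrt π → BM.IsTorsionfreeWrt π →
      BN.IsCompleteWrt π → BN.IsTorsionfreeWrt π →
      ∀ (f : M →ₗ[V] N), IsBoundedLinMap BM BN f →
      ∀ (BK : ModuleBornology V (LinearMap.ker f)),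
        (∀ S : Set (LinearMap.ker f),
          BK.IsBounded S ↔ BM.IsBounded (((↑) : LinearMap.ker f → M) '' S)) →
        BK.IsCompleteWrt π ∧ BK.IsTorsionfreeWrt π) ∧
    -- closure under arbitrary products
    (∀ (ι : Type) (M : ι → Type) [∀ i, AddCommGroup (M i)] [∀ i, Module V (M i)]
      (BM : ∀ i, ModuleBornology V (M i)),
      (∀ i, (BM i).IsCompleteWrt π) → (∀ i, (BM i).IsTorsionfreeWrt π) →
      ∀ (BP : ModuleBornology V (∀ i, M i)),
        (∀ S : Set (∀ i, M i),
          BP.IsBounded S ↔ ∀ i, (BM i).IsBounded ((fun x => x i) '' S)) →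
        BP.IsCompleteWrt π ∧ BP.IsTorsionfreeWrt π) := by
  constructor
  · -- kernels
    intro M N _ _ _ _ BM BN hMc hMtf hNc hNtf f hf BK hBK
    constructor
    · -- completeness
      intro S hS
      have hSM : BM.IsBounded (((↑) : LinearMap.ker f → M) '' S) := (hBK S).mp hS
      obtain ⟨Nb, hNb, hSN, hNcomp⟩ := hMc hSM
      obtain ⟨N₂, hN₂b, hfN, hN₂comp⟩ := hNc (hf hNb)
      refine ⟨Nb.comap (LinearMap.ker f).subtype, ?_, ?_, ?_⟩
      · refine (hBK _).mpr (BM.isBounded_subset ?_ hNb)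
        rintro _ ⟨x, hx, rfl⟩
        exact hx
      · intro s hs
        exact hSN ⟨s, hs, rfl⟩
      · obtain ⟨hausN, precN⟩ := (adicComplete_iff π Nb).mp hNcomp
        obtain ⟨hausN₂, -⟩ := (adicComplete_iff π N₂).mp hN₂comp
        rw [adicComplete_iff]
        constructor
        · intro z hz
          have h0 : (⟨((z : LinearMap.ker f) : M), z.2⟩ : Nb) = 0 := by
            refine hausN _ fun n => ?_
            obtain ⟨w, hw⟩ := hz n
            exact ⟨⟨((w : LinearMap.ker f) : M), w.2⟩, congrArg Subtype.val hw⟩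
          have hz0 : ((z : LinearMap.ker f) : M) = 0 := congrArg Subtype.val h0
          exact Subtype.ext (Subtype.ext hz0)
        · intro g hg
          obtain ⟨L, hL⟩ := precN (fun n => ⟨((g n : LinearMap.ker f) : M), (g n).2⟩)
            (fun m n hmn => by
              obtain ⟨w, hw⟩ := hg m n hmn
              exact ⟨⟨((w : LinearMap.ker f) : M), w.2⟩, congrArg Subtype.val hw⟩)
          have hgker : ∀ n : ℕ, f ((g n : LinearMap.ker f) : M) = 0 :=
            fun n => LinearMap.mem_ker.mp (g n : LinearMap.ker f).2
          have hfL : f (L : M) = 0 := by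
            have hmem : f (L : M) ∈ N₂ := by
              obtain ⟨w0, hw0⟩ := hL 0
              have h1 : (L : M) = ((g 0 : LinearMap.ker f) : M) - (w0 : M) := by
                simp only [pow_zero, one_smul] at hw0
                rw [hw0]; abel
              rw [h1, map_sub, hgker 0, zero_sub]
              exact neg_mem (hfN ⟨(w0 : M), w0.2, rfl⟩)
            have h0 : (⟨f (L : M), hmem⟩ : N₂) = 0 := by
              refine hausN₂ _ fun n => ?_
              obtain ⟨w, hw⟩ := hL n
              refine ⟨⟨-(f (w : M)), neg_mem (hfN ⟨(w : M), w.2, rfl⟩)⟩, ?_⟩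
              have h2 : f (π ^ n • (w : M)) = f ((g n : LinearMap.ker f) : M) - f (L : M) := by
                rw [hw, map_sub]
              rw [map_smul, hgker n, zero_sub] at h2
              show π ^ n • (-(f (w : M))) = f (L : M)
              rw [smul_neg, h2, neg_neg]
            exact congrArg Subtype.val h0
          refine ⟨⟨⟨(L : M), LinearMap.mem_ker.mpr hfL⟩, L.2⟩, fun n => ?_⟩
          obtain ⟨w, hw⟩ := hL n
          have hfw : f (w : M) = 0 := by
            refine pow_smul_eq_zero hNtf.1 n ?_
            have h2 : f (π ^ n • (w : M)) = 0 := by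
              rw [hw, map_sub, hgker n, hfL, sub_zero]
            rwa [map_smul] at h2
          refine ⟨⟨⟨(w : M), LinearMap.mem_ker.mpr hfw⟩, w.2⟩, ?_⟩
          exact Subtype.ext (by push_cast; exact hw)
    · -- torsionfreeness
      constructor
      · intro x y hxy
        exact Subtype.ext (hMtf.1 (congrArg Subtype.val hxy))
      · intro S hS
        refine (hBK _).mpr (BM.isBounded_subset ?_ (hMtf.2 ((hBK S).mp hS)))
        rintro _ ⟨x, hx, rfl⟩
        exact ⟨π • x, hx, rfl⟩
  · -- products
    intro ι M _ _ BM hc htf BP hBP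
    constructor
    · -- completeness
      intro S hS
      have h := (hBP S).mp hS
      choose Nf hNb hSN hNcomp using fun i => hc i (h i)
      refine ⟨Submodule.pi Set.univ Nf, ?_, ?_, ?_⟩
      · refine (hBP _).mpr fun i => (BM i).isBounded_subset ?_ (hNb i)
        rintro _ ⟨x, hx, rfl⟩
        exact hx i trivial
      · intro s hs i _
        exact hSN i ⟨s, hs, rfl⟩
      · rw [adicComplete_iff]
        have hch := fun i => (adicComplete_iff π (Nf i)).mp (hNcomp i)
        constructor
        · intro z hz
          have key : ∀ i, (z : ∀ j, M j) i = 0 := by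
            intro i
            have h0 := (hch i).1 ⟨(z : ∀ j, M j) i, z.2 i trivial⟩ (fun n => by
              obtain ⟨w, hw⟩ := hz n
              exact ⟨⟨(w : ∀ j, M j) i, w.2 i trivial⟩, by simpa using congrFun hw i⟩)
            exact congrArg Subtype.val h0
          exact Subtype.ext (funext key)
        · intro g hg
          choose L hL using fun i => (hch i).2
            (fun n => ⟨((g n : ∀ j, M j)) i, (g n).2 i trivial⟩)
            (fun m n hmn => by
              obtain ⟨w, hw⟩ := hg m n hmn
              exact ⟨⟨(w : ∀ j, M j) i, w.2 i trivial⟩, by simpa using congrFun hw i⟩)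
          refine ⟨⟨fun i => (L i : M i), fun i _ => (L i).2⟩, fun n => ?_⟩
          choose w hw using fun i => hL i n
          refine ⟨⟨fun i => (w i : M i), fun i _ => (w i).2⟩, funext fun i => ?_⟩
          simpa using hw i
    · -- torsionfreeness
      constructor
      · intro x y hxy
        funext i
        exact (htf i).1 (by simpa using congrFun hxy i)
      · intro S hS
        refine (hBP _).mpr fun i => (BM i).isBounded_subset ?_
          ((htf i).2 ((hBP S).mp hS i))
        rintro _ ⟨x, hx, rfl⟩
        exact ⟨π • x, hx, rfl⟩
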